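/- Define J_lib(ℰ) := (√2/π) ∫_{φ=−arccos(−ℰ)}^{arccos(−ℰ)} √(cos φ + ℰ) dφ for −1 < ℰ < 1. Then at every ℰ ∈ (−1,1) the function J_lib is differentiable with derivative J_lib'(ℰ) = (2/π) · K((1+ℰ)/2). -/

import Mathlib

open MeasureTheory Real

/-- The complete elliptic integral of the first kind,
`K(m) = ∫₀¹ ds/(√(1−s²)·√(1−m s²))`. -/
noncomputable def ellipticK (m : ℝ) : ℝ :=
  ∫ s in (0 : ℝ)..1, 1 / (Real.sqrt (1 - s ^ 2) * Real.sqrt (1 - m * s ^ 2))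

/-- The Whitham modulation quantity for superluminal librational wavetrains,
`J_lib(ℰ) = (√2/π) ∫_{−arccos(−ℰ)}^{arccos(−ℰ)} √(cos φ + ℰ) dφ`, for `−1 < ℰ < 1`. -/
noncomputable def J_lib (E : ℝ) : ℝ :=
  (Real.sqrt 2 / Real.pi) *
    ∫ φ in (-(Real.arccos (-E)))..(Real.arccos (-E)), Real.sqrt (Real.cos φ + E)

/- ### Auxiliary development -/

open Set intervalIntegral

/-- The fixed-domain representation. -/
noncomputable def glib (m : ℝ) : ℝ :=
  ∫ s in (0 : ℝ)..1, 2 * m * Real.sqrt (1 - s ^ 2) / Real.sqrt (1 - m * s ^ 2)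

/-- integrand of `ellipticK`. -/
noncomputable def kker (m : ℝ) (s : ℝ) : ℝ :=
  1 / (Real.sqrt (1 - s ^ 2) * Real.sqrt (1 - m * s ^ 2))

/-- the `m`-derivative of the `glib` integrand. -/
noncomputable def gder (m : ℝ) (s : ℝ) : ℝ :=
  2 * Real.sqrt (1 - s ^ 2) / Real.sqrt (1 - m * s ^ 2)
    + m * s ^ 2 * Real.sqrt (1 - s ^ 2) / Real.sqrt (1 - m * s ^ 2) ^ 3

lemma kker_integrable {m : ℝ} (hm0 : 0 ≤ m) (hm1 : m < 1) :
    IntervalIntegrable (kker m) volume 0 1 := by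
  have hbd : IntervalIntegrable
      (fun s : ℝ => (Real.sqrt (1 - m))⁻¹ * (1 - s) ^ (-(1/2) : ℝ)) volume 0 1 := by
    have h := (intervalIntegrable_rpow' (a := 0) (b := 1) (r := -(1/2))
      (by norm_num)).comp_sub_left 1
    simpa using (h.symm.const_mul (Real.sqrt (1 - m))⁻¹)
  rw [intervalIntegrable_iff_integrableOn_Ioc_of_le zero_le_one]
  have hbd' : IntegrableOn
      (fun s : ℝ => (Real.sqrt (1 - m))⁻¹ * (1 - s) ^ (-(1/2) : ℝ)) (Ioc 0 1) volume := by
    rw [intervalIntegrable_iff_integrableOn_Ioc_of_le zero_le_one] at hbd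
    exact hbd
  apply hbd'.mono' ?_ ?_
  · apply Measurable.aestronglyMeasurable
    apply Measurable.div measurable_const
    exact ((continuous_const.sub (continuous_pow 2)).sqrt.mul
      ((continuous_const.sub (continuous_const.mul (continuous_pow 2))).sqrt)).measurable
  · filter_upwards [ae_restrict_mem measurableSet_Ioc] with s hs
    obtain ⟨hs0, hs1⟩ := hs
    have h1m : (0:ℝ) < 1 - m := by linarith
    have hc : Real.sqrt (1 - s) ≤ Real.sqrt (1 - s ^ 2) := by
      apply Real.sqrt_le_sqrt; nlinarith
    have hu : Real.sqrt (1 - m) ≤ Real.sqrt (1 - m * s ^ 2) := by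
      apply Real.sqrt_le_sqrt
      nlinarith [mul_nonneg hm0 (by nlinarith : (0:ℝ) ≤ 1 - s ^ 2)]
    have hprod : Real.sqrt (1 - s) * Real.sqrt (1 - m)
        ≤ Real.sqrt (1 - s ^ 2) * Real.sqrt (1 - m * s ^ 2) :=
      mul_le_mul hc hu (Real.sqrt_nonneg _) (Real.sqrt_nonneg _)
    have hrw : (1 - s) ^ (-(1/2) : ℝ) = (Real.sqrt (1 - s))⁻¹ := by
      rw [Real.rpow_neg (by linarith), Real.sqrt_eq_rpow]
    rw [Real.norm_eq_abs, kker, abs_of_nonneg (by positivity)]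
    rw [hrw, ← mul_inv]
    rcases eq_or_lt_of_le hs1 with h | h
    · subst h
      simp
    · rw [one_div]
      apply inv_anti₀
      · exact mul_pos (Real.sqrt_pos.2 h1m) (Real.sqrt_pos.2 (by linarith))
      · calc Real.sqrt (1 - m) * Real.sqrt (1 - s)
            ≤ Real.sqrt (1 - s ^ 2) * Real.sqrt (1 - m * s ^ 2) := by
              rw [mul_comm]; exact hprod

lemma gder_cont {m : ℝ} (hm0 : 0 ≤ m) (hm1 : m < 1) :
    ContinuousOn (gder m) (Icc (0:ℝ) 1) := by
  have hpos : ∀ s ∈ Icc (0:ℝ) 1, (0:ℝ) < 1 - m * s ^ 2 := by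
    intro s hs
    have hs2 : s ^ 2 ≤ 1 := by nlinarith [hs.1, hs.2]
    nlinarith [mul_le_of_le_one_right hm0 hs2]
  have hcs : Continuous fun s : ℝ => Real.sqrt (1 - s ^ 2) :=
    (continuous_const.sub (continuous_pow 2)).sqrt
  have hcu : Continuous fun s : ℝ => Real.sqrt (1 - m * s ^ 2) :=
    (continuous_const.sub (continuous_const.mul (continuous_pow 2))).sqrt
  apply ContinuousOn.add
  · exact (continuous_const.mul hcs).continuousOn.div hcu.continuousOn
      (fun s hs => (Real.sqrt_pos.2 (hpos s hs)).ne')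
  · exact ((continuous_const.mul (continuous_pow 2)).mul hcs).continuousOn.div
      ((hcu.pow 3)).continuousOn
      (fun s hs => pow_ne_zero 3 (Real.sqrt_pos.2 (hpos s hs)).ne')

lemma hasDerivAt_B {m s : ℝ} (hm1 : m < 1) (hs : s ∈ Ioo (0:ℝ) 1) :
    HasDerivAt (fun t => t * Real.sqrt (1 - t ^ 2) / Real.sqrt (1 - m * t ^ 2))
      (gder m s - kker m s) s := by
  obtain ⟨hs0, hs1⟩ := hs
  have hs2 : 0 < 1 - s ^ 2 := by nlinarith
  have hu2 : 0 < 1 - m * s ^ 2 := by nlinarith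
  have hc0 : 0 < Real.sqrt (1 - s ^ 2) := Real.sqrt_pos.2 hs2
  have hu0 : 0 < Real.sqrt (1 - m * s ^ 2) := Real.sqrt_pos.2 hu2
  have h1 : HasDerivAt (fun t : ℝ => 1 - t ^ 2) (-(2 * s)) s := by
    simpa using ((hasDerivAt_pow 2 s).const_sub 1)
  have hc : HasDerivAt (fun t : ℝ => Real.sqrt (1 - t ^ 2))
      (1 / (2 * Real.sqrt (1 - s ^ 2)) * -(2 * s)) s :=
    (Real.hasDerivAt_sqrt hs2.ne').comp s h1
  have h2 : HasDerivAt (fun t : ℝ => 1 - m * t ^ 2) (-(m * (2 * s))) s := by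
    simpa [mul_comm, mul_assoc] using (((hasDerivAt_pow 2 s).const_mul m).const_sub 1)
  have hu : HasDerivAt (fun t : ℝ => Real.sqrt (1 - m * t ^ 2))
      (1 / (2 * Real.sqrt (1 - m * s ^ 2)) * -(m * (2 * s))) s :=
    (Real.hasDerivAt_sqrt hu2.ne').comp s h2
  have hN : HasDerivAt (fun t : ℝ => t * Real.sqrt (1 - t ^ 2))
      (1 * Real.sqrt (1 - s ^ 2) + s * (1 / (2 * Real.sqrt (1 - s ^ 2)) * -(2 * s))) s :=
    (hasDerivAt_id s).mul hc
  have hQ := hN.div hu hu0.ne'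
  refine hQ.congr_deriv ?_
  symm
  have hcs : Real.sqrt (1 - s ^ 2) ^ 2 = 1 - s ^ 2 := Real.sq_sqrt hs2.le
  have hus : Real.sqrt (1 - m * s ^ 2) ^ 2 = 1 - m * s ^ 2 := Real.sq_sqrt hu2.le
  rw [gder, kker]
  set c := Real.sqrt (1 - s ^ 2) with hc'
  set u := Real.sqrt (1 - m * s ^ 2) with hu'
  field_simp
  ring_nf
  linear_combination (u ^ 2) * hcs

lemma integral_gder {m : ℝ} (hm0 : 0 < m) (hm1 : m < 1) :
    ∫ s in (0:ℝ)..1, gder m s = ellipticK m := by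
  have hker := kker_integrable hm0.le hm1
  have hgint : IntervalIntegrable (gder m) volume 0 1 := by
    apply ContinuousOn.intervalIntegrable
    rw [uIcc_of_le zero_le_one]; exact gder_cont hm0.le hm1
  have hpos : ∀ s ∈ Icc (0:ℝ) 1, (0:ℝ) < 1 - m * s ^ 2 := by
    intro s hs
    have hs2 : s ^ 2 ≤ 1 := by nlinarith [hs.1, hs.2]
    nlinarith [mul_le_of_le_one_right hm0.le hs2]
  have hBcont : ContinuousOn
      (fun t : ℝ => t * Real.sqrt (1 - t ^ 2) / Real.sqrt (1 - m * t ^ 2)) (Icc 0 1) := by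
    apply ContinuousOn.div
    · exact (continuous_id.mul (continuous_const.sub (continuous_pow 2)).sqrt).continuousOn
    · exact ((continuous_const.sub (continuous_const.mul (continuous_pow 2))).sqrt).continuousOn
    · exact fun s hs => (Real.sqrt_pos.2 (hpos s hs)).ne'
  have hzero : ∫ s in (0:ℝ)..1, (gder m s - kker m s) = 0 := by
    have h := integral_eq_sub_of_hasDerivAt_of_le zero_le_one hBcont
      (fun s hs => hasDerivAt_B hm1 hs) (hgint.sub hker)
    rw [h]
    norm_num
  have hsub := intervalIntegral.integral_sub hgint hker
  rw [hzero] at hsub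
  have : ellipticK m = ∫ s in (0:ℝ)..1, kker m s := rfl
  rw [this]
  linarith

lemma glib_hasDerivAt {m : ℝ} (hm0 : 0 < m) (hm1 : m < 1) :
    HasDerivAt glib (ellipticK m) m := by
  set ε := min m (1 - m) / 2 with hε
  have hεm : ε ≤ m / 2 := by
    have := min_le_left m (1 - m); rw [hε]; linarith
  have hεm' : ε ≤ (1 - m) / 2 := by
    have := min_le_right m (1 - m); rw [hε]; linarith
  have hε0 : 0 < ε := by
    have : 0 < min m (1 - m) := lt_min hm0 (by linarith)
    rw [hε]; linarith
  set m1 := m + ε with hm1'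
  have hm11 : m1 < 1 := by rw [hm1']; linarith
  have hm10 : 0 < 1 - m1 := by linarith
  have hball : ∀ x ∈ Metric.ball m ε, 0 < x ∧ x < m1 := by
    intro x hx
    rw [Metric.mem_ball, Real.dist_eq, abs_lt] at hx
    exact ⟨by linarith [hx.1], by linarith [hx.2]⟩
  have hmeasF : ∀ x : ℝ, AEStronglyMeasurable
      (fun s : ℝ => 2 * x * Real.sqrt (1 - s ^ 2) / Real.sqrt (1 - x * s ^ 2))
      (volume.restrict (Set.uIoc (0:ℝ) 1)) := by
    intro x
    apply Measurable.aestronglyMeasurable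
    apply Measurable.div
    · exact (continuous_const.mul (continuous_const.sub (continuous_pow 2)).sqrt).measurable
    · exact ((continuous_const.sub (continuous_const.mul (continuous_pow 2))).sqrt).measurable
  have hintF : IntervalIntegrable
      (fun s : ℝ => 2 * m * Real.sqrt (1 - s ^ 2) / Real.sqrt (1 - m * s ^ 2)) volume 0 1 := by
    apply ContinuousOn.intervalIntegrable
    rw [uIcc_of_le zero_le_one]
    apply ContinuousOn.div
    · exact (continuous_const.mul (continuous_const.sub (continuous_pow 2)).sqrt).continuousOn
    · exact ((continuous_const.sub (continuous_const.mul (continuous_pow 2))).sqrt).continuousOn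
    · intro s hs
      have hs2 : s ^ 2 ≤ 1 := by nlinarith [hs.1, hs.2]
      have : (0:ℝ) < 1 - m * s ^ 2 := by
        nlinarith [mul_le_of_le_one_right hm0.le hs2]
      exact (Real.sqrt_pos.2 this).ne'
  have hmeasF' : AEStronglyMeasurable (gder m) (volume.restrict (Set.uIoc (0:ℝ) 1)) := by
    apply Measurable.aestronglyMeasurable
    apply Measurable.add
    · apply Measurable.div
      · exact (continuous_const.mul (continuous_const.sub (continuous_pow 2)).sqrt).measurable
      · exact ((continuous_const.sub (continuous_const.mul (continuous_pow 2))).sqrt).measurable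
    · apply Measurable.div
      · exact ((continuous_const.mul (continuous_pow 2)).mul
          (continuous_const.sub (continuous_pow 2)).sqrt).measurable
      · exact (((continuous_const.sub (continuous_const.mul (continuous_pow 2))).sqrt).pow
          3).measurable
  set C := 2 / Real.sqrt (1 - m1) + 1 / Real.sqrt (1 - m1) ^ 3 with hC
  have hbound : ∀ᵐ s ∂volume, s ∈ Set.uIoc (0:ℝ) 1 → ∀ x ∈ Metric.ball m ε,
      ‖gder x s‖ ≤ C := by
    apply ae_of_all
    intro s hs x hx
    rw [uIoc_of_le zero_le_one] at hs
    obtain ⟨hs0, hs1⟩ := hs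
    obtain ⟨hx0, hxm1⟩ := hball x hx
    have hs2 : s ^ 2 ≤ 1 := by nlinarith
    have hxs : x * s ^ 2 < m1 := by
      calc x * s ^ 2 ≤ x * 1 := by
            exact mul_le_mul_of_nonneg_left hs2 hx0.le
        _ < m1 := by linarith
    have huu : (0:ℝ) < 1 - x * s ^ 2 := by linarith
    have hu0 : 0 < Real.sqrt (1 - x * s ^ 2) := Real.sqrt_pos.2 huu
    have hum : Real.sqrt (1 - m1) ≤ Real.sqrt (1 - x * s ^ 2) :=
      Real.sqrt_le_sqrt (by linarith)
    have hum0 : 0 < Real.sqrt (1 - m1) := Real.sqrt_pos.2 hm10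
    have hcle : Real.sqrt (1 - s ^ 2) ≤ 1 := by
      have := Real.sqrt_le_sqrt (by nlinarith : 1 - s ^ 2 ≤ (1:ℝ))
      simpa using this
    have hcnn : 0 ≤ Real.sqrt (1 - s ^ 2) := Real.sqrt_nonneg _
    rw [Real.norm_eq_abs, abs_of_nonneg (by rw [gder]; positivity)]
    rw [gder, hC]
    apply add_le_add
    · apply div_le_div₀ (by norm_num) (by linarith) hum0 hum
    · apply div_le_div₀ (by norm_num) ?_ (by positivity) ?_
      · calc x * s ^ 2 * Real.sqrt (1 - s ^ 2) ≤ x * s ^ 2 * 1 :=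
              mul_le_mul_of_nonneg_left hcle (by positivity)
          _ = x * s ^ 2 := mul_one _
          _ ≤ m1 := by linarith
          _ ≤ 1 := by linarith
      · exact pow_le_pow_left₀ hum0.le hum 3
  have hdiff : ∀ᵐ s ∂volume, s ∈ Set.uIoc (0:ℝ) 1 → ∀ x ∈ Metric.ball m ε,
      HasDerivAt (fun x : ℝ => 2 * x * Real.sqrt (1 - s ^ 2) / Real.sqrt (1 - x * s ^ 2))
        (gder x s) x := by
    apply ae_of_all
    intro s hs x hx
    rw [uIoc_of_le zero_le_one] at hs
    obtain ⟨hs0, hs1⟩ := hs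
    obtain ⟨hx0, hxm1⟩ := hball x hx
    have hs2 : s ^ 2 ≤ 1 := by nlinarith
    have huu : (0:ℝ) < 1 - x * s ^ 2 := by
      have : x * s ^ 2 ≤ x * 1 := mul_le_mul_of_nonneg_left hs2 hx0.le
      linarith
    have hu0 : 0 < Real.sqrt (1 - x * s ^ 2) := Real.sqrt_pos.2 huu
    have hn : HasDerivAt (fun x : ℝ => 2 * x * Real.sqrt (1 - s ^ 2))
        (2 * Real.sqrt (1 - s ^ 2)) x := by
      simpa using (((hasDerivAt_id x).const_mul 2).mul_const (Real.sqrt (1 - s ^ 2)))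
    have hin : HasDerivAt (fun x : ℝ => 1 - x * s ^ 2) (-(s ^ 2)) x := by
      simpa using ((hasDerivAt_id x).mul_const (s ^ 2)).const_sub 1
    have hud : HasDerivAt (fun x : ℝ => Real.sqrt (1 - x * s ^ 2))
        (1 / (2 * Real.sqrt (1 - x * s ^ 2)) * -(s ^ 2)) x :=
      (Real.hasDerivAt_sqrt huu.ne').comp x hin
    have hq := hn.div hud hu0.ne'
    refine hq.congr_deriv ?_
    symm
    rw [gder]
    have hus : Real.sqrt (1 - x * s ^ 2) ^ 2 = 1 - x * s ^ 2 := Real.sq_sqrt huu.le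
    set c := Real.sqrt (1 - s ^ 2) with hcdef
    set u := Real.sqrt (1 - x * s ^ 2) with hudef
    field_simp
    ring_nf
  have h := intervalIntegral.hasDerivAt_integral_of_dominated_loc_of_deriv_le
    (F := fun x s => 2 * x * Real.sqrt (1 - s ^ 2) / Real.sqrt (1 - x * s ^ 2))
    (F' := fun x s => gder x s) (bound := fun _ => C)
    (Metric.ball_mem_nhds m hε0) (Filter.Eventually.of_forall fun x => hmeasF x) hintF hmeasF' hbound
    intervalIntegrable_const hdiff
  have h2 := h.2
  rw [integral_gder hm0 hm1] at h2
  exact h2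

lemma J_lib_eq {E : ℝ} (hE₁ : -1 < E) (hE₂ : E < 1) :
    J_lib E = (4 / Real.pi) * glib ((1 + E) / 2) := by
  set m := (1 + E) / 2 with hm
  clear_value m
  have hm0 : 0 < m := by rw [hm]; linarith
  have hm1 : m < 1 := by rw [hm]; linarith
  have hsm0 : 0 ≤ Real.sqrt m := Real.sqrt_nonneg m
  have hsm1 : Real.sqrt m < 1 := by
    rw [show (1:ℝ) = Real.sqrt 1 by simp]
    exact Real.sqrt_lt_sqrt hm0.le hm1
  have hsq : Real.sqrt m ^ 2 = m := Real.sq_sqrt hm0.le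
  -- Step a : arccos (−E) = 2 arcsin √m
  have hcos : Real.cos (2 * Real.arcsin (Real.sqrt m)) = -E := by
    rw [Real.cos_two_mul', Real.cos_arcsin, Real.sin_arcsin (by linarith) hsm1.le]
    rw [Real.sq_sqrt (by nlinarith : (0:ℝ) ≤ 1 - Real.sqrt m ^ 2), hsq]
    rw [hm]; ring
  have harcsin_nonneg : 0 ≤ Real.arcsin (Real.sqrt m) := Real.arcsin_nonneg.2 hsm0
  have harcsin_le : Real.arcsin (Real.sqrt m) ≤ Real.pi / 2 := Real.arcsin_le_pi_div_two _
  have harc : Real.arccos (-E) = 2 * Real.arcsin (Real.sqrt m) := by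
    rw [← hcos, Real.arccos_cos (by linarith) (by linarith)]
  -- Step b : substitution φ = 2 arcsin (√m s)
  have hsub : (∫ x in (-1:ℝ)..1,
        (2 * (Real.sqrt m / Real.sqrt (1 - m * x ^ 2))) •
          Real.sqrt (Real.cos (2 * Real.arcsin (Real.sqrt m * x)) + E))
      = ∫ φ in (2 * Real.arcsin (Real.sqrt m * (-1)))..(2 * Real.arcsin (Real.sqrt m * 1)),
          Real.sqrt (Real.cos φ + E) := by
    apply intervalIntegral.integral_comp_smul_deriv
      (f := fun s => 2 * Real.arcsin (Real.sqrt m * s))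
      (f' := fun s => 2 * (Real.sqrt m / Real.sqrt (1 - m * s ^ 2)))
      (g := fun φ => Real.sqrt (Real.cos φ + E))
    · intro x hx
      rw [uIcc_of_le (by norm_num : (-1:ℝ) ≤ 1)] at hx
      have hx2 : x ^ 2 ≤ 1 := by nlinarith [hx.1, hx.2]
      have habs : |Real.sqrt m * x| < 1 := by
        rw [abs_mul, abs_of_nonneg hsm0]
        calc Real.sqrt m * |x| ≤ Real.sqrt m * 1 := by
              apply mul_le_mul_of_nonneg_left _ hsm0
              rw [abs_le]; constructor <;> linarith [hx.1, hx.2]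
          _ < 1 := by linarith
      have h1 : Real.sqrt m * x ≠ -1 := by
        intro h; rw [h] at habs; norm_num at habs
      have h2 : Real.sqrt m * x ≠ 1 := by
        intro h; rw [h] at habs; norm_num at habs
      have hin : HasDerivAt (fun s : ℝ => Real.sqrt m * s) (Real.sqrt m) x := by
        simpa using (hasDerivAt_id x).const_mul (Real.sqrt m)
      have := ((Real.hasDerivAt_arcsin h1 h2).comp x hin).const_mul 2
      refine this.congr_deriv ?_
      symm
      rw [mul_pow, hsq]
      ring
    · rw [uIcc_of_le (by norm_num : (-1:ℝ) ≤ 1)]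
      apply ContinuousOn.mul continuousOn_const
      apply ContinuousOn.div continuousOn_const
      · exact ((continuous_const.sub (continuous_const.mul (continuous_pow 2))).sqrt).continuousOn
      · intro s hs
        have hs2 : s ^ 2 ≤ 1 := by nlinarith [hs.1, hs.2]
        have : (0:ℝ) < 1 - m * s ^ 2 := by
          nlinarith [mul_le_of_le_one_right hm0.le hs2]
        exact (Real.sqrt_pos.2 this).ne'
    · exact ((continuous_cos.add continuous_const).sqrt)
  -- rewrite the endpoints
  have hend1 : 2 * Real.arcsin (Real.sqrt m * 1) = Real.arccos (-E) := by
    rw [mul_one, harc]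
  have hend0 : 2 * Real.arcsin (Real.sqrt m * (-1)) = -Real.arccos (-E) := by
    rw [harc]
    rw [show Real.sqrt m * (-1) = -Real.sqrt m by ring, Real.arcsin_neg]
    ring
  rw [hend0, hend1] at hsub
  -- identify the left-hand side integrand
  have hLHS : ∀ x ∈ uIcc (-1:ℝ) 1,
      (2 * (Real.sqrt m / Real.sqrt (1 - m * x ^ 2))) •
        Real.sqrt (Real.cos (2 * Real.arcsin (Real.sqrt m * x)) + E)
      = Real.sqrt 2 * (2 * m * Real.sqrt (1 - x ^ 2) / Real.sqrt (1 - m * x ^ 2)) := by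
    intro x hx
    rw [uIcc_of_le (by norm_num : (-1:ℝ) ≤ 1)] at hx
    have hx2 : x ^ 2 ≤ 1 := by nlinarith [hx.1, hx.2]
    have hmx : |Real.sqrt m * x| ≤ 1 := by
      rw [abs_mul, abs_of_nonneg hsm0]
      calc Real.sqrt m * |x| ≤ Real.sqrt m * 1 := by
            apply mul_le_mul_of_nonneg_left _ hsm0
            rw [abs_le]; constructor <;> linarith [hx.1, hx.2]
        _ ≤ 1 := by linarith
    rw [abs_le] at hmx
    have hcos2 : Real.cos (2 * Real.arcsin (Real.sqrt m * x)) = 1 - 2 * (m * x ^ 2) := by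
      rw [Real.cos_two_mul', Real.cos_arcsin, Real.sin_arcsin hmx.1 hmx.2]
      rw [Real.sq_sqrt (by nlinarith [hmx.1, hmx.2] : (0:ℝ) ≤ 1 - (Real.sqrt m * x) ^ 2)]
      rw [mul_pow, hsq]; ring
    rw [hcos2]
    have : (1 : ℝ) - 2 * (m * x ^ 2) + E = 2 * m * (1 - x ^ 2) := by
      rw [hm]; ring
    rw [smul_eq_mul, this]
    have hu0' : (0:ℝ) < 1 - m * x ^ 2 := by
      nlinarith [mul_le_of_le_one_right hm0.le hx2]
    have hune : Real.sqrt (1 - m * x ^ 2) ≠ 0 := (Real.sqrt_pos.2 hu0').ne'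
    have hmm : Real.sqrt m * Real.sqrt m = m := Real.mul_self_sqrt hm0.le
    rw [show (2:ℝ) * m * (1 - x ^ 2) = (2 * m) * (1 - x ^ 2) by ring,
      Real.sqrt_mul (by positivity), Real.sqrt_mul (by norm_num : (0:ℝ) ≤ 2)]
    field_simp
    linear_combination (Real.sqrt (1 - x ^ 2)) * hsq
  rw [intervalIntegral.integral_congr hLHS] at hsub
  -- evenness reduction
  have hintG : ∀ a b : ℝ, a ≤ b → -1 ≤ a → b ≤ 1 → IntervalIntegrable
      (fun x : ℝ => Real.sqrt 2 * (2 * m * Real.sqrt (1 - x ^ 2) / Real.sqrt (1 - m * x ^ 2)))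
      volume a b := by
    intro a b hab ha hb
    apply ContinuousOn.intervalIntegrable
    rw [uIcc_of_le hab]
    apply ContinuousOn.mul continuousOn_const
    apply ContinuousOn.div
    · exact (continuous_const.mul (continuous_const.sub (continuous_pow 2)).sqrt).continuousOn
    · exact ((continuous_const.sub (continuous_const.mul (continuous_pow 2))).sqrt).continuousOn
    · intro s hs
      have hs2 : s ^ 2 ≤ 1 := by nlinarith [hs.1, hs.2]
      have : (0:ℝ) < 1 - m * s ^ 2 := by
        nlinarith [mul_le_of_le_one_right hm0.le hs2]
      exact (Real.sqrt_pos.2 this).ne'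
  have heven : (∫ x in (-1:ℝ)..1,
      Real.sqrt 2 * (2 * m * Real.sqrt (1 - x ^ 2) / Real.sqrt (1 - m * x ^ 2)))
      = 2 * ∫ x in (0:ℝ)..1,
        Real.sqrt 2 * (2 * m * Real.sqrt (1 - x ^ 2) / Real.sqrt (1 - m * x ^ 2)) := by
    have hadd := intervalIntegral.integral_add_adjacent_intervals
      (hintG (-1) 0 (by norm_num) le_rfl (by norm_num))
      (hintG 0 1 zero_le_one (by norm_num) le_rfl)
    have hneg : (∫ x in (-1:ℝ)..0,
        Real.sqrt 2 * (2 * m * Real.sqrt (1 - x ^ 2) / Real.sqrt (1 - m * x ^ 2)))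
        = ∫ x in (0:ℝ)..1,
          Real.sqrt 2 * (2 * m * Real.sqrt (1 - x ^ 2) / Real.sqrt (1 - m * x ^ 2)) := by
      have := intervalIntegral.integral_comp_neg (a := (0:ℝ)) (b := 1)
        (fun x : ℝ => Real.sqrt 2 * (2 * m * Real.sqrt (1 - x ^ 2) / Real.sqrt (1 - m * x ^ 2)))
      simp only [neg_zero, neg_neg] at this
      rw [← this]
      apply intervalIntegral.integral_congr
      intro x hx
      simp [neg_pow]
    rw [← hadd, hneg]
    ring
  rw [heven] at hsub
  -- pull constants out
  rw [J_lib, ← hsub, intervalIntegral.integral_const_mul]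
  simp only [glib]
  have h2 : Real.sqrt 2 * Real.sqrt 2 = 2 := Real.mul_self_sqrt (by norm_num)
  set G := ∫ s in (0:ℝ)..1, 2 * m * Real.sqrt (1 - s ^ 2) / Real.sqrt (1 - m * s ^ 2) with hG
  rw [show Real.sqrt 2 / Real.pi * (2 * (Real.sqrt 2 * G))
      = Real.sqrt 2 * Real.sqrt 2 * (2 * G) / Real.pi from by ring, h2]
  ring

/-- **Derivative of the librational averaged integral.** For every `ℰ ∈ (−1,1)`, `J_lib` is
differentiable at `ℰ` with `J_lib'(ℰ) = (2/π) K((1+ℰ)/2)`. -/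
theorem J_lib_hasDerivAt (E : ℝ) (hE₁ : -1 < E) (hE₂ : E < 1) :
    HasDerivAt J_lib ((2 / Real.pi) * ellipticK ((1 + E) / 2)) E := by
  have hm0 : (0:ℝ) < (1 + E) / 2 := by linarith
  have hm1 : (1 + E) / 2 < 1 := by linarith
  have hg : HasDerivAt glib (ellipticK ((1 + E) / 2)) ((1 + E) / 2) :=
    glib_hasDerivAt hm0 hm1
  have hinner : HasDerivAt (fun x : ℝ => (1 + x) / 2) (1 / 2) E := by
    simpa using ((hasDerivAt_id E).const_add 1).div_const 2
  have hcomp : HasDerivAt (fun x : ℝ => glib ((1 + x) / 2))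
      (ellipticK ((1 + E) / 2) * (1 / 2)) E := by have := hg.comp E hinner; exact this
  have hfull : HasDerivAt (fun x : ℝ => (4 / Real.pi) * glib ((1 + x) / 2))
      ((4 / Real.pi) * (ellipticK ((1 + E) / 2) * (1 / 2))) E := hcomp.const_mul _
  have heq : J_lib =ᶠ[nhds E] fun x : ℝ => (4 / Real.pi) * glib ((1 + x) / 2) := by
    filter_upwards [Ioo_mem_nhds hE₁ hE₂] with x hx
    exact J_lib_eq hx.1 hx.2
  have := hfull.congr_of_eventuallyEq heq
  refine this.congr_deriv ?_
  ring
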